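/- With f and T_n as above, |E f(T_n)| ≤ 2 for all n ≥ 0, and moreover for n ≥ 2, E f(T_n) = (2/n)(1 − E F(T_{n−1})). -/

import Mathlib

open MeasureTheory

inductive BTree : Type
  | nil : BTree
  | node : BTree → BTree → BTree
deriving DecidableEq

namespace BTree

instance : MeasurableSpace BTree := ⊤

def size : BTree → ℕ
  | nil => 0
  | node l r => size l + size r + 1

def left : BTree → BTree
  | nil => nil
  | node l _ => l

def right : BTree → BTree
  | nil => nil
  | node _ r => r

/-- The number of maximal green nodes (green = outdegree ≤ 1, maximal = no green
strict ancestor): a green root gives the unique maximal green node. -/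
def F : BTree → ℕ
  | nil => 0
  | node l r => if l = nil ∨ r = nil then 1 else F l + F r

/-- The toll function `f(T) = F(T) - F(T_L) - F(T_R)`. -/
def f : BTree → ℤ
  | nil => 0
  | node nil r => 1 - F r
  | node l nil => 1 - F l
  | node _ _ => 0

/-- The list of all subtrees `T_v` rooted at nodes `v` of `T`. -/
def subtrees : BTree → List BTree
  | nil => []
  | node l r => node l r :: (subtrees l ++ subtrees r)

/-- The root is green: the tree is nonempty and has at most one root child. -/
def greenRoot : BTree → Prop
  | nil => False
  | node l r => l = nil ∨ r = nil

instance : DecidablePred greenRoot := fun t => by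
  cases t <;> simp [greenRoot] <;> infer_instance

/-- The random binary search tree with `n` nodes. -/
noncomputable def bst : ℕ → PMF BTree
  | 0 => PMF.pure nil
  | n + 1 =>
    (PMF.uniformOfFintype (Fin (n + 1))).bind fun i =>
      (bst i.val).bind fun l => (bst (n - i.val)).bind fun r => PMF.pure (node l r)
  decreasing_by
    · exact i.isLt
    · omega

/-- `fchain k T` is the number of green chains of length `k` in `T` starting at the root. -/
def fchain : ℕ → BTree → ℕ
  | 0, _ => 0
  | 1, nil => 0
  | 1, node l r => if l = nil ∨ r = nil then 1 else 0
  | _ + 2, nil => 0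
  | k + 2, node l r =>
    if l = nil ∨ r = nil then
      ((subtrees l).map (fun t => fchain (k + 1) t)).sum
        + ((subtrees r).map (fun t => fchain (k + 1) t)).sum
    else 0
  termination_by k _ => k

/-- `Fchain k T` is the total number of green chains of length `k` in `T`. -/
def Fchain (k : ℕ) (T : BTree) : ℕ := ((subtrees T).map (fchain k)).sum

end BTree

namespace BTreeAux

open BTree MeasureTheory

instance : MeasurableSingletonClass BTree := ⟨fun _ => trivial⟩

theorem measurable_btree {β : Type*} [MeasurableSpace β] (g : BTree → β) : Measurable g :=
  fun _ _ => trivial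

/-- The finset of all binary trees with `n` nodes (a superset of the support of `bst n`). -/
def trees : ℕ → Finset BTree
  | 0 => {nil}
  | n + 1 =>
    (Finset.univ : Finset (Fin (n + 1))).biUnion fun i =>
      ((trees i.val) ×ˢ (trees (n - i.val))).image fun p => node p.1 p.2
  decreasing_by
    · exact i.isLt
    · omega

theorem size_of_mem_trees : ∀ n : ℕ, ∀ t ∈ trees n, t.size = n := by
  intro n
  induction n using Nat.strong_induction_on with
  | _ n ih =>
    match n with
    | 0 =>
      intro t ht
      simp only [trees, Finset.mem_singleton] at ht
      subst ht; rfl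
    | n + 1 =>
      intro t ht
      simp only [trees, Finset.mem_biUnion, Finset.mem_image, Finset.mem_product,
        Finset.mem_univ, true_and] at ht
      obtain ⟨i, ⟨⟨l, r⟩, ⟨hl, hr⟩, ht⟩⟩ := ht
      subst ht
      have h1 := ih i.val i.isLt l hl
      have h2 := ih (n - i.val) (by omega) r hr
      have : i.val ≤ n := by omega
      simp only [size, h1, h2]
      omega

theorem ne_nil_of_mem_trees {n : ℕ} (hn : 1 ≤ n) {t : BTree} (ht : t ∈ trees n) : t ≠ nil := by
  intro h
  have := size_of_mem_trees n t ht
  rw [h] at this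
  simp [size] at this
  omega

theorem support_bst : ∀ n : ℕ, (bst n).support ⊆ ↑(trees n) := by
  intro n
  induction n using Nat.strong_induction_on with
  | _ n ih =>
    match n with
    | 0 =>
      rw [show bst 0 = PMF.pure nil from by rw [bst], PMF.support_pure]
      intro t ht
      simp only [Set.mem_singleton_iff] at ht
      subst ht
      rw [show trees 0 = {nil} from by rw [trees]]
      simp
    | n + 1 =>
      rw [show bst (n + 1) = (PMF.uniformOfFintype (Fin (n + 1))).bind fun i =>
          (bst i.val).bind fun l => (bst (n - i.val)).bind fun r => PMF.pure (node l r) from by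
        rw [bst]]
      intro t ht
      simp only [PMF.support_bind, PMF.support_pure, Set.mem_iUnion] at ht
      obtain ⟨i, _, l, hl, r, hr, ht⟩ := ht
      simp only [Set.mem_singleton_iff] at ht
      subst ht
      have hl' := ih i.val i.isLt hl
      have hr' := ih (n - i.val) (by omega) hr
      have hmem : node l r ∈ trees (n + 1) := by
        simp only [trees, Finset.mem_biUnion, Finset.mem_image, Finset.mem_product,
          Finset.mem_univ, true_and]
        exact ⟨i, (l, r), ⟨Finset.mem_coe.1 hl', Finset.mem_coe.1 hr'⟩, rfl⟩
      exact Finset.mem_coe.2 hmem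

theorem sum_toReal_eq_one {α : Type*} (p : PMF α) (s : Finset α) (h : p.support ⊆ ↑s) :
    ∑ a ∈ s, (p a).toReal = 1 := by
  have h1 : ∑ a ∈ s, p a = 1 := by
    rw [← p.tsum_coe]
    exact (tsum_eq_sum fun a ha => (p.apply_eq_zero_iff a).2 fun hc => ha (h hc)).symm
  rw [← ENNReal.toReal_sum fun a _ => p.apply_ne_top a, h1, ENNReal.toReal_one]

theorem integrable_pmf (p : PMF BTree) (s : Finset BTree) (h : p.support ⊆ ↑s)
    (g : BTree → ℝ) : Integrable g p.toMeasure := by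
  refine Integrable.mono' (integrable_const (∑ t ∈ s, |g t|)) ?_ ?_
  · exact ((measurable_btree g).stronglyMeasurable).aestronglyMeasurable
  · have hnull : p.toMeasure ((↑s : Set BTree)ᶜ) = 0 :=
      (p.toMeasure_apply_eq_zero_iff trivial).2
        (Set.disjoint_left.mpr fun t ht hc => hc (h ht))
    refine Filter.eventually_iff.2 ?_
    rw [MeasureTheory.mem_ae_iff]
    refine measure_mono_null (fun t ht => ?_) hnull
    simp only [Set.mem_compl_iff, Set.mem_setOf_eq, Finset.mem_coe] at ht ⊢
    intro hts
    refine ht ?_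
    rw [Real.norm_eq_abs]
    exact Finset.single_le_sum (fun t _ => abs_nonneg (g t)) hts

theorem exp_eq_sum (p : PMF BTree) (s : Finset BTree) (h : p.support ⊆ ↑s) (g : BTree → ℝ) :
    ∫ t, g t ∂p.toMeasure = ∑ t ∈ s, (p t).toReal * g t := by
  rw [PMF.integral_eq_tsum p g (integrable_pmf p s h g)]
  rw [tsum_eq_sum (s := s) fun t ht => by
    rw [(p.apply_eq_zero_iff t).2 fun hc => ht (h hc)]; simp]
  simp [smul_eq_mul]

theorem exp_pure (x : BTree) (g : BTree → ℝ) :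
    ∫ t, g t ∂(PMF.pure x).toMeasure = g x := by
  rw [PMF.toMeasure_pure, integral_dirac]

theorem exp_bind {α : Type*} (p : PMF α) (s0 : Finset α) (hp : p.support ⊆ ↑s0)
    (q : α → PMF BTree) (s : α → Finset BTree) (hq : ∀ a, (q a).support ⊆ ↑(s a))
    (g : BTree → ℝ) :
    ∫ t, g t ∂(p.bind q).toMeasure
      = ∑ a ∈ s0, (p a).toReal * ∫ t, g t ∂(q a).toMeasure := by
  set S : Finset BTree := s0.biUnion s with hS
  have hsupp : (p.bind q).support ⊆ ↑S := by
    rw [PMF.support_bind]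
    intro t ht
    simp only [Set.mem_iUnion] at ht
    obtain ⟨a, ha, hta⟩ := ht
    simp only [hS, Finset.coe_biUnion, Finset.mem_coe, Set.mem_iUnion]
    exact ⟨a, hp ha, hq a hta⟩
  rw [exp_eq_sum _ S hsupp g]
  have hbind : ∀ t, ((p.bind q) t).toReal = ∑ a ∈ s0, (p a).toReal * (q a t).toReal := by
    intro t
    rw [PMF.bind_apply]
    rw [tsum_eq_sum (s := s0) fun a ha => by
      rw [(p.apply_eq_zero_iff a).2 fun hc => ha (hp hc)]; simp]
    rw [ENNReal.toReal_sum fun a _ => ENNReal.mul_ne_top (p.apply_ne_top a) ((q a).apply_ne_top t)]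
    exact Finset.sum_congr rfl fun a _ => ENNReal.toReal_mul
  calc ∑ t ∈ S, ((p.bind q) t).toReal * g t
      = ∑ t ∈ S, ∑ a ∈ s0, (p a).toReal * (q a t).toReal * g t := by
        refine Finset.sum_congr rfl fun t _ => ?_
        rw [hbind t, Finset.sum_mul]
    _ = ∑ a ∈ s0, ∑ t ∈ S, (p a).toReal * ((q a t).toReal * g t) := by
        rw [Finset.sum_comm]
        exact Finset.sum_congr rfl fun a _ => Finset.sum_congr rfl fun t _ => mul_assoc _ _ _
    _ = ∑ a ∈ s0, (p a).toReal * ∑ t ∈ S, (q a t).toReal * g t := by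
        exact Finset.sum_congr rfl fun a _ => (Finset.mul_sum _ _ _).symm
    _ = ∑ a ∈ s0, (p a).toReal * ∫ t, g t ∂(q a).toMeasure := by
        refine Finset.sum_congr rfl fun a ha => ?_
        congr 1
        rw [exp_eq_sum (q a) (s a) (hq a) g]
        refine (Finset.sum_subset (Finset.subset_biUnion_of_mem s ha) fun t _ ht => ?_).symm
        rw [(((q a)).apply_eq_zero_iff t).2 fun hc => ht (hq a hc)]
        simp

theorem exp_bst_succ (n : ℕ) (g : BTree → ℝ) :
    ∫ t, g t ∂(bst (n + 1)).toMeasure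
      = ∑ i : Fin (n + 1), ((n : ℝ) + 1)⁻¹ *
          ∑ l ∈ trees i.val, ((bst i.val) l).toReal *
            ∑ r ∈ trees (n - i.val), ((bst (n - i.val)) r).toReal * g (node l r) := by
  rw [show bst (n + 1) = (PMF.uniformOfFintype (Fin (n + 1))).bind fun i =>
      (bst i.val).bind fun l => (bst (n - i.val)).bind fun r => PMF.pure (node l r) from by
    rw [bst]]
  rw [exp_bind _ Finset.univ (by simp [PMF.support_uniformOfFintype])
    _ (fun i => (trees i.val).biUnion fun l => (trees (n - i.val)).image (node l))
    (fun i => by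
      rw [PMF.support_bind]
      intro t ht
      simp only [Set.mem_iUnion] at ht
      obtain ⟨l, hl, ht⟩ := ht
      rw [PMF.support_bind] at ht
      simp only [Set.mem_iUnion, PMF.support_pure, Set.mem_singleton_iff] at ht
      obtain ⟨r, hr, ht⟩ := ht
      subst ht
      refine Finset.mem_coe.2 (Finset.mem_biUnion.2
        ⟨l, Finset.mem_coe.1 (support_bst _ hl),
          Finset.mem_image.2 ⟨r, Finset.mem_coe.1 (support_bst _ hr), rfl⟩⟩)) g]
  refine Finset.sum_congr rfl fun i _ => ?_
  congr 1
  · rw [PMF.uniformOfFintype_apply,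
      (show (Fintype.card (Fin (n + 1)) : ENNReal) = ((n + 1 : ℕ) : ENNReal) from by simp),
      ENNReal.toReal_inv, ENNReal.toReal_natCast]
    push_cast
    ring
  · rw [exp_bind _ (trees i.val) (support_bst _)
      _ (fun l => (trees (n - i.val)).image (node l))
      (fun l => by
        rw [PMF.support_bind]
        intro t ht
        simp only [Set.mem_iUnion, PMF.support_pure, Set.mem_singleton_iff] at ht
        obtain ⟨r, hr, ht⟩ := ht
        subst ht
        exact Finset.mem_coe.2
          (Finset.mem_image.2 ⟨r, Finset.mem_coe.1 (support_bst _ hr), rfl⟩)) g]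
    refine Finset.sum_congr rfl fun l _ => ?_
    congr 1
    rw [exp_bind _ (trees (n - i.val)) (support_bst _)
      _ (fun r => {node l r})
      (fun r => by rw [PMF.support_pure]; intro u hu; simpa using hu) g]
    refine Finset.sum_congr rfl fun r _ => ?_
    rw [exp_pure]

theorem F_le_size : ∀ t : BTree, F t ≤ size t := by
  intro t
  induction t with
  | nil => simp [F, size]
  | node l r ihl ihr =>
    simp only [F, size]
    split
    · omega
    · omega

theorem f_node_nil_left (r : BTree) : f (node nil r) = 1 - (F r : ℤ) := by
  cases r <;> simp [f]

theorem f_node_nil_right (l : BTree) : f (node l nil) = 1 - (F l : ℤ) := by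
  cases l <;> simp [f]

theorem f_node_ne_nil {l r : BTree} (hl : l ≠ nil) (hr : r ≠ nil) : f (node l r) = 0 := by
  cases l with
  | nil => exact absurd rfl hl
  | node a b =>
    cases r with
    | nil => exact absurd rfl hr
    | node c d => simp [f]

theorem bst_zero_apply : ((bst 0) nil).toReal = 1 := by
  rw [show bst 0 = PMF.pure nil from by rw [bst], PMF.pure_apply_self]
  simp

theorem expF_nonneg (n : ℕ) : 0 ≤ ∫ t, (F t : ℝ) ∂(bst n).toMeasure := by
  rw [exp_eq_sum _ (trees n) (support_bst n)]
  refine Finset.sum_nonneg fun t _ => mul_nonneg ENNReal.toReal_nonneg (by positivity)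

theorem expF_le (n : ℕ) : ∫ t, (F t : ℝ) ∂(bst n).toMeasure ≤ n := by
  rw [exp_eq_sum _ (trees n) (support_bst n)]
  calc ∑ t ∈ trees n, ((bst n) t).toReal * (F t : ℝ)
      ≤ ∑ t ∈ trees n, ((bst n) t).toReal * (n : ℝ) := by
        refine Finset.sum_le_sum fun t ht => ?_
        refine mul_le_mul_of_nonneg_left ?_ ENNReal.toReal_nonneg
        have h1 : F t ≤ n := (size_of_mem_trees n t ht) ▸ F_le_size t
        exact_mod_cast h1
    _ = (n : ℝ) := by
        rw [← Finset.sum_mul, sum_toReal_eq_one _ _ (support_bst n), one_mul]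

theorem exp_f_formula (m : ℕ) :
    ∫ t, (f t : ℝ) ∂(bst (m + 2)).toMeasure
      = (2 / (m + 2 : ℝ)) * (1 - ∫ t, (F t : ℝ) ∂(bst (m + 1)).toMeasure) := by
  rw [exp_bst_succ (m + 1) fun t => (f t : ℝ)]
  set c : ℝ := 1 - ∫ t, (F t : ℝ) ∂(bst (m + 1)).toMeasure with hc
  have hinner : ∀ (w : BTree → ℝ), (∀ t ∈ trees (m+1), w t = 1 - (F t : ℝ)) →
      ∑ t ∈ trees (m+1), ((bst (m+1)) t).toReal * w t = c := by
    intro w hw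
    have : ∑ t ∈ trees (m+1), ((bst (m+1)) t).toReal * w t
        = ∑ t ∈ trees (m+1), (((bst (m+1)) t).toReal * 1
            - ((bst (m+1)) t).toReal * (F t : ℝ)) := by
      refine Finset.sum_congr rfl fun t ht => ?_
      rw [hw t ht]; ring
    rw [this, Finset.sum_sub_distrib, ← Finset.sum_mul,
      sum_toReal_eq_one _ _ (support_bst (m+1)), hc,
      exp_eq_sum _ (trees (m+1)) (support_bst (m+1))]
    ring
  have h0 : ∀ i : Fin (m + 1 + 1),
      (∑ l ∈ trees i.val, ((bst i.val) l).toReal *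
        ∑ r ∈ trees (m + 1 - i.val), ((bst (m + 1 - i.val)) r).toReal * ((f (node l r) : ℝ)))
      = if i = 0 ∨ i = Fin.last (m + 1) then c else 0 := by
    intro i
    by_cases hi0 : i = 0
    · subst hi0
      simp only [if_pos (Or.inl rfl), Fin.val_zero, Nat.sub_zero]
      rw [show trees 0 = {nil} from by rw [trees], Finset.sum_singleton, bst_zero_apply, one_mul]
      refine hinner _ fun r _ => ?_
      rw [f_node_nil_left]
      push_cast
      ring
    · by_cases hil : i = Fin.last (m + 1)
      · subst hil
        simp only [if_pos (Or.inr rfl), Fin.val_last]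
        have hsub : m + 1 - (m + 1) = 0 := by omega
        rw [hsub]
        have : ∀ l : BTree, (∑ r ∈ trees 0, ((bst 0) r).toReal * ((f (node l r) : ℝ)))
            = 1 - (F l : ℝ) := by
          intro l
          rw [show trees 0 = {nil} from by rw [trees], Finset.sum_singleton, bst_zero_apply, one_mul,
            f_node_nil_right]
          push_cast
          ring
        refine hinner _ fun l hl => this l
      · rw [if_neg (by tauto)]
        have h0v : ((0 : Fin (m + 1 + 1)) : ℕ) = 0 := rfl
        have hlv : ((Fin.last (m + 1) : Fin (m + 1 + 1)) : ℕ) = m + 1 := rfl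
        have hi1 : 1 ≤ i.val := by
          rcases Nat.eq_zero_or_pos i.val with h | h
          · exact absurd (Fin.ext (by omega)) hi0
          · exact h
        have hi2 : i.val ≤ m := by
          have hlt := i.isLt
          rcases Nat.lt_or_ge i.val (m + 1) with h | h
          · omega
          · exact absurd (Fin.ext (by omega)) hil
        refine Finset.sum_eq_zero fun l hl => ?_
        refine mul_eq_zero_of_right _ (Finset.sum_eq_zero fun r hr => ?_)
        have hlnil : l ≠ nil := ne_nil_of_mem_trees hi1 hl
        have hrnil : r ≠ nil := ne_nil_of_mem_trees (by omega) hr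
        rw [f_node_ne_nil hlnil hrnil]
        simp
  simp only [h0]
  have hne : (0 : Fin (m + 1 + 1)) ≠ Fin.last (m + 1) := by
    intro h
    have := congrArg Fin.val h
    simp [Fin.val_last] at this
  rw [← Finset.add_sum_erase _ _ (Finset.mem_univ (0 : Fin (m + 1 + 1)))]
  rw [← Finset.add_sum_erase _ _ (Finset.mem_erase.2 ⟨hne.symm, Finset.mem_univ _⟩)]
  rw [Finset.sum_eq_zero fun i hi => by
    simp only [Finset.mem_erase] at hi
    rw [if_neg (by tauto), mul_zero]]
  rw [if_pos (Or.inl rfl), if_pos (Or.inr rfl)]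
  have h2 : ((m : ℝ) + 2) ≠ 0 := by positivity
  push_cast
  field_simp
  ring

theorem exp_f_zero : ∫ t, (f t : ℝ) ∂(bst 0).toMeasure = 0 := by
  rw [show bst 0 = PMF.pure nil from by rw [bst], exp_pure]
  simp [f]

theorem exp_f_one : ∫ t, (f t : ℝ) ∂(bst 1).toMeasure = 1 := by
  rw [exp_bst_succ 0 fun t => (f t : ℝ)]
  rw [Fin.sum_univ_one]
  simp only [Fin.val_zero, Nat.sub_self]
  rw [show trees 0 = {nil} from by rw [trees], Finset.sum_singleton, Finset.sum_singleton,
    bst_zero_apply]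
  have hf : f (node nil nil) = 1 := by simp [f, F]
  rw [hf]
  norm_num

end BTreeAux

open BTree in
/-- `|E f(T_n)| ≤ 2` for all `n ≥ 0`, and for `n ≥ 2`,
`E f(T_n) = (2/n)(1 − E F(T_{n−1}))`. -/
theorem expectation_f_bound_and_formula :
    (∀ n : ℕ, |∫ t, (f t : ℝ) ∂((bst n).toMeasure)| ≤ 2) ∧
    (∀ n : ℕ, 2 ≤ n →
      ∫ t, (f t : ℝ) ∂((bst n).toMeasure)
        = (2 / n) * (1 - ∫ t, (F t : ℝ) ∂((bst (n - 1)).toMeasure))) := by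
  constructor
  · intro n
    match n with
    | 0 => rw [BTreeAux.exp_f_zero]; norm_num
    | 1 => rw [BTreeAux.exp_f_one]; norm_num
    | m + 2 =>
      rw [BTreeAux.exp_f_formula m]
      have h1 := BTreeAux.expF_nonneg (m + 1)
      have h2 := BTreeAux.expF_le (m + 1)
      push_cast at h2
      set x := ∫ t, (F t : ℝ) ∂(bst (m + 1)).toMeasure with hx
      have hm : (0 : ℝ) < (m : ℝ) + 2 := by positivity
      rw [abs_le]
      constructor
      · rw [div_mul_eq_mul_div, le_div_iff₀ hm]
        nlinarith
      · rw [div_mul_eq_mul_div, div_le_iff₀ hm]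
        nlinarith
  · intro n hn
    obtain ⟨m, rfl⟩ : ∃ m, n = m + 2 := ⟨n - 2, by omega⟩
    rw [BTreeAux.exp_f_formula m]
    have h1 : m + 2 - 1 = m + 1 := by omega
    rw [h1]
    push_cast
    ring
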